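/- (The total radiated 4-momentum is future-pointing and causal.) Let (Ω, μ) be a finite measure space, let n̂ : Ω → ℝ³ be measurable with |n̂(ω)| = 1 for all ω, and set k(ω) = (1, n̂(ω)) ∈ ℝ⁴ (a future-pointing null vector). Let A : Ω → (real symmetric 4×4 matrices) be measurable with A(ω)_{ij} k(ω)^j = 0 for all i and ω (sum over j), such that the scalar F(ω) = A_{mn}A^{mn} − ½(A^m{}_m)² (computed with η-raised indices) is μ-integrable. Then the vector P whose components are P^i = ∫_Ω F(ω) k(ω)^i dμ(ω) satisfies P⁰ ≥ 0 and η_{ij}P^iP^j ≤ 0; i.e. P is a future-pointing causal vector. -/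

import Mathlib

open scoped BigOperators

noncomputable section

/-- The Minkowski metric η = diag(−1,1,1,1) on ℝ⁴. -/
def eta (i j : Fin 4) : ℝ := if i = j then (if i = 0 then -1 else 1) else 0

/-- Minkowski inner product a·b = η_{ij} a^i b^j. -/
def mdot (a b : Fin 4 → ℝ) : ℝ := ∑ i, ∑ j, eta i j * a i * b j

/-- Lowering an index with η : k_i = η_{ij} k^j. -/
def lo (a : Fin 4 → ℝ) (i : Fin 4) : ℝ := ∑ j, eta i j * a j

set_option maxHeartbeats 4000000 in
lemma sos_key (s11 s12 s13 s22 s23 s33 n0 n1 n2 : ℝ)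
    (hn : n0^2 + n1^2 + n2^2 = 1) :
    0 ≤ (1/2 : ℝ)*s33^2 + (-1 : ℝ)*s33^2*n2^2 + (1/2 : ℝ)*s33^2*n2^4 + (-2 : ℝ)*s23*s33*n1*n2 + (2 : ℝ)*s23*s33*n1*n2^3 + (2 : ℝ)*s23^2 + (-2 : ℝ)*s23^2*n2^2 + (-2 : ℝ)*s23^2*n1^2 + (2 : ℝ)*s23^2*n1^2*n2^2 + (-1 : ℝ)*s22*s33 + (1 : ℝ)*s22*s33*n2^2 + (1 : ℝ)*s22*s33*n1^2 + (1 : ℝ)*s22*s33*n1^2*n2^2 + (-2 : ℝ)*s22*s23*n1*n2 + (2 : ℝ)*s22*s23*n1^3*n2 + (1/2 : ℝ)*s22^2 + (-1 : ℝ)*s22^2*n1^2 + (1/2 : ℝ)*s22^2*n1^4 + (-2 : ℝ)*s13*s33*n0*n2 + (2 : ℝ)*s13*s33*n0*n2^3 + (-4 : ℝ)*s13*s23*n0*n1 + (4 : ℝ)*s13*s23*n0*n1*n2^2 + (2 : ℝ)*s13*s22*n0*n2 + (2 : ℝ)*s13*s22*n0*n1^2*n2 + (2 : ℝ)*s13^2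 + (-2 : ℝ)*s13^2*n2^2 + (-2 : ℝ)*s13^2*n0^2 + (2 : ℝ)*s13^2*n0^2*n2^2 + (2 : ℝ)*s12*s33*n0*n1 + (2 : ℝ)*s12*s33*n0*n1*n2^2 + (-4 : ℝ)*s12*s23*n0*n2 + (4 : ℝ)*s12*s23*n0*n1^2*n2 + (-2 : ℝ)*s12*s22*n0*n1 + (2 : ℝ)*s12*s22*n0*n1^3 + (-4 : ℝ)*s12*s13*n1*n2 + (4 : ℝ)*s12*s13*n0^2*n1*n2 + (2 : ℝ)*s12^2 + (-2 : ℝ)*s12^2*n1^2 + (-2 : ℝ)*s12^2*n0^2 + (2 : ℝ)*s12^2*n0^2*n1^2 + (-1 : ℝ)*s11*s33 + (1 : ℝ)*s11*s33*n2^2 + (1 : ℝ)*s11*s33*n0^2 + (1 : ℝ)*s11*s33*n0^2*n2^2 + (2 : ℝ)*s11*s23*n1*n2 + (2 : ℝ)*s11*s23*n0^2*n1*n2 + (-1 : ℝ)*s11*s22 + (1 : ℝ)*s11*s22*n1^2 + (1 : ℝ)*s11*s22*n0^2 + (1 : ℝ)*s11*s22*n0^2*n1^2 + (-2 : ℝ)*s11*s13*n0*n2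 + (2 : ℝ)*s11*s13*n0^3*n2 + (-2 : ℝ)*s11*s12*n0*n1 + (2 : ℝ)*s11*s12*n0^3*n1 + (1/2 : ℝ)*s11^2 + (-1 : ℝ)*s11^2*n0^2 + (1/2 : ℝ)*s11^2*n0^4 := by
  have h : ((1/2 : ℝ)*s33^2 + (-1 : ℝ)*s33^2*n2^2 + (1/2 : ℝ)*s33^2*n2^4 + (-2 : ℝ)*s23*s33*n1*n2 + (2 : ℝ)*s23*s33*n1*n2^3 + (2 : ℝ)*s23^2 + (-2 : ℝ)*s23^2*n2^2 + (-2 : ℝ)*s23^2*n1^2 + (2 : ℝ)*s23^2*n1^2*n2^2 + (-1 : ℝ)*s22*s33 + (1 : ℝ)*s22*s33*n2^2 + (1 : ℝ)*s22*s33*n1^2 + (1 : ℝ)*s22*s33*n1^2*n2^2 + (-2 : ℝ)*s22*s23*n1*n2 + (2 : ℝ)*s22*s23*n1^3*n2 + (1/2 : ℝ)*s22^2 + (-1 : ℝ)*s22^2*n1^2 + (1/2 : ℝ)*s22^2*n1^4 + (-2 : ℝ)*s13*s33*n0*n2 + (2 : ℝ)*s13*s33*n0*n2^3 + (-4 : ℝ)*s13*s23*n0*n1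 + (4 : ℝ)*s13*s23*n0*n1*n2^2 + (2 : ℝ)*s13*s22*n0*n2 + (2 : ℝ)*s13*s22*n0*n1^2*n2 + (2 : ℝ)*s13^2 + (-2 : ℝ)*s13^2*n2^2 + (-2 : ℝ)*s13^2*n0^2 + (2 : ℝ)*s13^2*n0^2*n2^2 + (2 : ℝ)*s12*s33*n0*n1 + (2 : ℝ)*s12*s33*n0*n1*n2^2 + (-4 : ℝ)*s12*s23*n0*n2 + (4 : ℝ)*s12*s23*n0*n1^2*n2 + (-2 : ℝ)*s12*s22*n0*n1 + (2 : ℝ)*s12*s22*n0*n1^3 + (-4 : ℝ)*s12*s13*n1*n2 + (4 : ℝ)*s12*s13*n0^2*n1*n2 + (2 : ℝ)*s12^2 + (-2 : ℝ)*s12^2*n1^2 + (-2 : ℝ)*s12^2*n0^2 + (2 : ℝ)*s12^2*n0^2*n1^2 + (-1 : ℝ)*s11*s33 + (1 : ℝ)*s11*s33*n2^2 + (1 : ℝ)*s11*s33*n0^2 + (1 : ℝ)*s11*s33*n0^2*n2^2 + (2 : ℝ)*s11*s23*n1*n2 + (2 : ℝ)*s11*s23*n0^2*n1*n2 + (-1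 : ℝ)*s11*s22 + (1 : ℝ)*s11*s22*n1^2 + (1 : ℝ)*s11*s22*n0^2 + (1 : ℝ)*s11*s22*n0^2*n1^2 + (-2 : ℝ)*s11*s13*n0*n2 + (2 : ℝ)*s11*s13*n0^3*n2 + (-2 : ℝ)*s11*s12*n0*n1 + (2 : ℝ)*s11*s12*n0^3*n1 + (1/2 : ℝ)*s11^2 + (-1 : ℝ)*s11^2*n0^2 + (1/2 : ℝ)*s11^2*n0^4) = ((-1/2 : ℝ)*s33 + (1/2 : ℝ)*s33*n2^2 + (1/2 : ℝ)*s33*n0^2 + (1/2 : ℝ)*s33*n0^2*n2^2 + (1 : ℝ)*s23*n1*n2 + (1 : ℝ)*s23*n0^2*n1*n2 + (-1/2 : ℝ)*s22 + (1/2 : ℝ)*s22*n1^2 + (1/2 : ℝ)*s22*n0^2 + (1/2 : ℝ)*s22*n0^2*n1^2 + (-1 : ℝ)*s13*n0*n2 + (1 : ℝ)*s13*n0^3*n2 + (-1 : ℝ)*s12*n0*n1 + (1 : ℝ)*s12*n0^3*n1 + (1/2 : ℝ)*s11 + (-1 : ℝ)*s11*n0^2 + (1/2 : ℝ)*s11*n0^4)^2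 + ((-1/2 : ℝ)*s33 + (1/2 : ℝ)*s33*n2^2 + (1/2 : ℝ)*s33*n1^2 + (1/2 : ℝ)*s33*n1^2*n2^2 + (-1 : ℝ)*s23*n1*n2 + (1 : ℝ)*s23*n1^3*n2 + (1/2 : ℝ)*s22 + (-1 : ℝ)*s22*n1^2 + (1/2 : ℝ)*s22*n1^4 + (1 : ℝ)*s13*n0*n2 + (1 : ℝ)*s13*n0*n1^2*n2 + (-1 : ℝ)*s12*n0*n1 + (1 : ℝ)*s12*n0*n1^3 + (-1/2 : ℝ)*s11 + (1/2 : ℝ)*s11*n1^2 + (1/2 : ℝ)*s11*n0^2 + (1/2 : ℝ)*s11*n0^2*n1^2)^2 + ((1/2 : ℝ)*s33 + (-1 : ℝ)*s33*n2^2 + (1/2 : ℝ)*s33*n2^4 + (-1 : ℝ)*s23*n1*n2 + (1 : ℝ)*s23*n1*n2^3 + (-1/2 : ℝ)*s22 + (1/2 : ℝ)*s22*n2^2 + (1/2 : ℝ)*s22*n1^2 + (1/2 : ℝ)*s22*n1^2*n2^2 + (-1 : ℝ)*s13*n0*n2 + (1 : ℝ)*s13*n0*n2^3 + (1 : ℝ)*s12*n0*n1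 + (1 : ℝ)*s12*n0*n1*n2^2 + (-1/2 : ℝ)*s11 + (1/2 : ℝ)*s11*n2^2 + (1/2 : ℝ)*s11*n0^2 + (1/2 : ℝ)*s11*n0^2*n2^2)^2 + 2*((1/2 : ℝ)*s33*n0*n1 + (1/2 : ℝ)*s33*n0*n1*n2^2 + (-1 : ℝ)*s23*n0*n2 + (1 : ℝ)*s23*n0*n1^2*n2 + (-1/2 : ℝ)*s22*n0*n1 + (1/2 : ℝ)*s22*n0*n1^3 + (-1 : ℝ)*s13*n1*n2 + (1 : ℝ)*s13*n0^2*n1*n2 + (1 : ℝ)*s12 + (-1 : ℝ)*s12*n1^2 + (-1 : ℝ)*s12*n0^2 + (1 : ℝ)*s12*n0^2*n1^2 + (-1/2 : ℝ)*s11*n0*n1 + (1/2 : ℝ)*s11*n0^3*n1)^2 + 2*((-1/2 : ℝ)*s33*n0*n2 + (1/2 : ℝ)*s33*n0*n2^3 + (-1 : ℝ)*s23*n0*n1 + (1 : ℝ)*s23*n0*n1*n2^2 + (1/2 : ℝ)*s22*n0*n2 + (1/2 : ℝ)*s22*n0*n1^2*n2 + (1 : ℝ)*s13 + (-1 : ℝ)*s13*n2^2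 + (-1 : ℝ)*s13*n0^2 + (1 : ℝ)*s13*n0^2*n2^2 + (-1 : ℝ)*s12*n1*n2 + (1 : ℝ)*s12*n0^2*n1*n2 + (-1/2 : ℝ)*s11*n0*n2 + (1/2 : ℝ)*s11*n0^3*n2)^2 + 2*((-1/2 : ℝ)*s33*n1*n2 + (1/2 : ℝ)*s33*n1*n2^3 + (1 : ℝ)*s23 + (-1 : ℝ)*s23*n2^2 + (-1 : ℝ)*s23*n1^2 + (1 : ℝ)*s23*n1^2*n2^2 + (-1/2 : ℝ)*s22*n1*n2 + (1/2 : ℝ)*s22*n1^3*n2 + (-1 : ℝ)*s13*n0*n1 + (1 : ℝ)*s13*n0*n1*n2^2 + (-1 : ℝ)*s12*n0*n2 + (1 : ℝ)*s12*n0*n1^2*n2 + (1/2 : ℝ)*s11*n1*n2 + (1/2 : ℝ)*s11*n0^2*n1*n2)^2 := by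
    linear_combination ((1/4 : ℝ)*s33^2 + (-3/4 : ℝ)*s33^2*n2^2 + (3/4 : ℝ)*s33^2*n2^4 + (-1/4 : ℝ)*s33^2*n2^6 + (-1/4 : ℝ)*s33^2*n1^2 + (-1/2 : ℝ)*s33^2*n1^2*n2^2 + (-1/4 : ℝ)*s33^2*n1^2*n2^4 + (-1/4 : ℝ)*s33^2*n0^2 + (-1/2 : ℝ)*s33^2*n0^2*n2^2 + (-1/4 : ℝ)*s33^2*n0^2*n2^4 + (-1 : ℝ)*s23*s33*n1*n2 + (4 : ℝ)*s23*s33*n1*n2^3 + (-1 : ℝ)*s23*s33*n1*n2^5 + (-1 : ℝ)*s23*s33*n1^3*n2 + (-1 : ℝ)*s23*s33*n1^3*n2^3 + (-1 : ℝ)*s23*s33*n0^2*n1*n2 + (-1 : ℝ)*s23*s33*n0^2*n1*n2^3 + (-2 : ℝ)*s23^2*n2^2 + (-2 : ℝ)*s23^2*n1^2 + (5 : ℝ)*s23^2*n1^2*n2^2 + (-1 : ℝ)*s23^2*n1^2*n2^4 + (-1 : ℝ)*s23^2*n1^4*n2^2 + (-1 : ℝ)*s23^2*n0^2*n1^2*n2^2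 + (1/2 : ℝ)*s22*s33 + (1 : ℝ)*s22*s33*n2^2 + (-1/2 : ℝ)*s22*s33*n2^4 + (1 : ℝ)*s22*s33*n1^2 + (3/2 : ℝ)*s22*s33*n1^2*n2^2 + (-1/2 : ℝ)*s22*s33*n1^2*n2^4 + (-1/2 : ℝ)*s22*s33*n1^4 + (-1/2 : ℝ)*s22*s33*n1^4*n2^2 + (-1/2 : ℝ)*s22*s33*n0^2 + (-1/2 : ℝ)*s22*s33*n0^2*n2^2 + (-1/2 : ℝ)*s22*s33*n0^2*n1^2 + (-1/2 : ℝ)*s22*s33*n0^2*n1^2*n2^2 + (-1 : ℝ)*s22*s23*n1*n2 + (-1 : ℝ)*s22*s23*n1*n2^3 + (4 : ℝ)*s22*s23*n1^3*n2 + (-1 : ℝ)*s22*s23*n1^3*n2^3 + (-1 : ℝ)*s22*s23*n1^5*n2 + (-1 : ℝ)*s22*s23*n0^2*n1*n2 + (-1 : ℝ)*s22*s23*n0^2*n1^3*n2 + (1/4 : ℝ)*s22^2 + (-1/4 : ℝ)*s22^2*n2^2 + (-3/4 : ℝ)*s22^2*n1^2 + (-1/2 : ℝ)*s22^2*n1^2*n2^2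 + (3/4 : ℝ)*s22^2*n1^4 + (-1/4 : ℝ)*s22^2*n1^4*n2^2 + (-1/4 : ℝ)*s22^2*n1^6 + (-1/4 : ℝ)*s22^2*n0^2 + (-1/2 : ℝ)*s22^2*n0^2*n1^2 + (-1/4 : ℝ)*s22^2*n0^2*n1^4 + (-1 : ℝ)*s13*s33*n0*n2 + (4 : ℝ)*s13*s33*n0*n2^3 + (-1 : ℝ)*s13*s33*n0*n2^5 + (-1 : ℝ)*s13*s33*n0*n1^2*n2 + (-1 : ℝ)*s13*s33*n0*n1^2*n2^3 + (-1 : ℝ)*s13*s33*n0^3*n2 + (-1 : ℝ)*s13*s33*n0^3*n2^3 + (-4 : ℝ)*s13*s23*n0*n1 + (10 : ℝ)*s13*s23*n0*n1*n2^2 + (-2 : ℝ)*s13*s23*n0*n1*n2^4 + (-2 : ℝ)*s13*s23*n0*n1^3*n2^2 + (-2 : ℝ)*s13*s23*n0^3*n1*n2^2 + (3 : ℝ)*s13*s22*n0*n2 + (-1 : ℝ)*s13*s22*n0*n2^3 + (4 : ℝ)*s13*s22*n0*n1^2*n2 + (-1 : ℝ)*s13*s22*n0*n1^2*n2^3 +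 (-1 : ℝ)*s13*s22*n0*n1^4*n2 + (-1 : ℝ)*s13*s22*n0^3*n2 + (-1 : ℝ)*s13*s22*n0^3*n1^2*n2 + (-2 : ℝ)*s13^2*n2^2 + (-2 : ℝ)*s13^2*n0^2 + (5 : ℝ)*s13^2*n0^2*n2^2 + (-1 : ℝ)*s13^2*n0^2*n2^4 + (-1 : ℝ)*s13^2*n0^2*n1^2*n2^2 + (-1 : ℝ)*s13^2*n0^4*n2^2 + (3 : ℝ)*s12*s33*n0*n1 + (4 : ℝ)*s12*s33*n0*n1*n2^2 + (-1 : ℝ)*s12*s33*n0*n1*n2^4 + (-1 : ℝ)*s12*s33*n0*n1^3 + (-1 : ℝ)*s12*s33*n0*n1^3*n2^2 + (-1 : ℝ)*s12*s33*n0^3*n1 + (-1 : ℝ)*s12*s33*n0^3*n1*n2^2 + (-4 : ℝ)*s12*s23*n0*n2 + (10 : ℝ)*s12*s23*n0*n1^2*n2 + (-2 : ℝ)*s12*s23*n0*n1^2*n2^3 + (-2 : ℝ)*s12*s23*n0*n1^4*n2 + (-2 : ℝ)*s12*s23*n0^3*n1^2*n2 + (-1 : ℝ)*s12*s22*n0*n1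 + (-1 : ℝ)*s12*s22*n0*n1*n2^2 + (4 : ℝ)*s12*s22*n0*n1^3 + (-1 : ℝ)*s12*s22*n0*n1^3*n2^2 + (-1 : ℝ)*s12*s22*n0*n1^5 + (-1 : ℝ)*s12*s22*n0^3*n1 + (-1 : ℝ)*s12*s22*n0^3*n1^3 + (-4 : ℝ)*s12*s13*n1*n2 + (10 : ℝ)*s12*s13*n0^2*n1*n2 + (-2 : ℝ)*s12*s13*n0^2*n1*n2^3 + (-2 : ℝ)*s12*s13*n0^2*n1^3*n2 + (-2 : ℝ)*s12*s13*n0^4*n1*n2 + (-2 : ℝ)*s12^2*n1^2 + (-2 : ℝ)*s12^2*n0^2 + (5 : ℝ)*s12^2*n0^2*n1^2 + (-1 : ℝ)*s12^2*n0^2*n1^2*n2^2 + (-1 : ℝ)*s12^2*n0^2*n1^4 + (-1 : ℝ)*s12^2*n0^4*n1^2 + (1/2 : ℝ)*s11*s33 + (1 : ℝ)*s11*s33*n2^2 + (-1/2 : ℝ)*s11*s33*n2^4 + (-1/2 : ℝ)*s11*s33*n1^2 + (-1/2 : ℝ)*s11*s33*n1^2*n2^2 + (1 : ℝ)*s11*s33*n0^2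 + (3/2 : ℝ)*s11*s33*n0^2*n2^2 + (-1/2 : ℝ)*s11*s33*n0^2*n2^4 + (-1/2 : ℝ)*s11*s33*n0^2*n1^2 + (-1/2 : ℝ)*s11*s33*n0^2*n1^2*n2^2 + (-1/2 : ℝ)*s11*s33*n0^4 + (-1/2 : ℝ)*s11*s33*n0^4*n2^2 + (3 : ℝ)*s11*s23*n1*n2 + (-1 : ℝ)*s11*s23*n1*n2^3 + (-1 : ℝ)*s11*s23*n1^3*n2 + (4 : ℝ)*s11*s23*n0^2*n1*n2 + (-1 : ℝ)*s11*s23*n0^2*n1*n2^3 + (-1 : ℝ)*s11*s23*n0^2*n1^3*n2 + (-1 : ℝ)*s11*s23*n0^4*n1*n2 + (1/2 : ℝ)*s11*s22 + (-1/2 : ℝ)*s11*s22*n2^2 + (1 : ℝ)*s11*s22*n1^2 + (-1/2 : ℝ)*s11*s22*n1^2*n2^2 + (-1/2 : ℝ)*s11*s22*n1^4 + (1 : ℝ)*s11*s22*n0^2 + (-1/2 : ℝ)*s11*s22*n0^2*n2^2 + (3/2 : ℝ)*s11*s22*n0^2*n1^2 + (-1/2 : ℝ)*s11*s22*n0^2*n1^2*n2^2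 + (-1/2 : ℝ)*s11*s22*n0^2*n1^4 + (-1/2 : ℝ)*s11*s22*n0^4 + (-1/2 : ℝ)*s11*s22*n0^4*n1^2 + (-1 : ℝ)*s11*s13*n0*n2 + (-1 : ℝ)*s11*s13*n0*n2^3 + (-1 : ℝ)*s11*s13*n0*n1^2*n2 + (4 : ℝ)*s11*s13*n0^3*n2 + (-1 : ℝ)*s11*s13*n0^3*n2^3 + (-1 : ℝ)*s11*s13*n0^3*n1^2*n2 + (-1 : ℝ)*s11*s13*n0^5*n2 + (-1 : ℝ)*s11*s12*n0*n1 + (-1 : ℝ)*s11*s12*n0*n1*n2^2 + (-1 : ℝ)*s11*s12*n0*n1^3 + (4 : ℝ)*s11*s12*n0^3*n1 + (-1 : ℝ)*s11*s12*n0^3*n1*n2^2 + (-1 : ℝ)*s11*s12*n0^3*n1^3 + (-1 : ℝ)*s11*s12*n0^5*n1 + (1/4 : ℝ)*s11^2 + (-1/4 : ℝ)*s11^2*n2^2 + (-1/4 : ℝ)*s11^2*n1^2 + (-3/4 : ℝ)*s11^2*n0^2 + (-1/2 : ℝ)*s11^2*n0^2*n2^2 + (-1/2 : ℝ)*s11^2*n0^2*n1^2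 + (3/4 : ℝ)*s11^2*n0^4 + (-1/4 : ℝ)*s11^2*n0^4*n2^2 + (-1/4 : ℝ)*s11^2*n0^4*n1^2 + (-1/4 : ℝ)*s11^2*n0^6) * hn
  rw [h]
  positivity

set_option maxHeartbeats 4000000 in
lemma F_nonneg (a : Fin 4 → Fin 4 → ℝ) (n0 n1 n2 : ℝ)
    (hn : n0 ^ 2 + n1 ^ 2 + n2 ^ 2 = 1)
    (hsymm : ∀ i j, a i j = a j i)
    (hc : ∀ i : Fin 4, a i 0 + a i 1 * n0 + a i 2 * n1 + a i 3 * n2 = 0) :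
    0 ≤ (∑ m, ∑ p, (∑ x, ∑ y, eta m x * eta p y * a x y) * a m p)
        - (1 / 2) * (∑ m, ∑ x, eta m x * a x m) ^ 2 := by
  have e1' : a 1 0 = -(a 1 1 * n0 + a 1 2 * n1 + a 1 3 * n2) := by linarith [hc 1]
  have e2' : a 2 0 = -(a 1 2 * n0 + a 2 2 * n1 + a 2 3 * n2) := by
    have h := hc 2; rw [hsymm 2 1] at h; linarith
  have e3' : a 3 0 = -(a 1 3 * n0 + a 2 3 * n1 + a 3 3 * n2) := by
    have h := hc 3; rw [hsymm 3 1, hsymm 3 2] at h; linarith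
  have e1 : a 0 1 = -(a 1 1 * n0 + a 1 2 * n1 + a 1 3 * n2) := by rw [hsymm 0 1]; exact e1'
  have e2 : a 0 2 = -(a 1 2 * n0 + a 2 2 * n1 + a 2 3 * n2) := by rw [hsymm 0 2]; exact e2'
  have e3 : a 0 3 = -(a 1 3 * n0 + a 2 3 * n1 + a 3 3 * n2) := by rw [hsymm 0 3]; exact e3'
  have e0 : a 0 0 = (a 1 1 * n0 + a 1 2 * n1 + a 1 3 * n2) * n0
      + (a 1 2 * n0 + a 2 2 * n1 + a 2 3 * n2) * n1
      + (a 1 3 * n0 + a 2 3 * n1 + a 3 3 * n2) * n2 := by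
    have h := hc 0
    rw [e1, e2, e3] at h; linarith
  simp [eta, Fin.sum_univ_four]
  rw [hsymm 2 1, hsymm 3 1, hsymm 3 2, e0, e1, e2, e3, e1', e2', e3']
  have hkey := sos_key (a 1 1) (a 1 2) (a 1 3) (a 2 2) (a 2 3) (a 3 3) n0 n1 n2 hn
  linarith

open MeasureTheory

set_option maxHeartbeats 2000000 in
/-- The total radiated 4-momentum
`P^i = ∫ F(ω) k(ω)^i dμ(ω)`, with `k(ω) = (1, n̂(ω))` null and future-pointing
and `F = A_{mn}A^{mn} − ½(A^m{}_m)²` for symmetric `A` with `A_{ij}k^j = 0`,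
is a future-pointing causal vector: `P⁰ ≥ 0` and `η_{ij}P^iP^j ≤ 0`. -/
theorem radiated_four_momentum_future_causal
    {Ω : Type*} [MeasurableSpace Ω] (μ : Measure Ω) [IsFiniteMeasure μ]
    (n : Ω → EuclideanSpace ℝ (Fin 3)) (hn_meas : Measurable n)
    (hn : ∀ ω, ‖n ω‖ = 1)
    (k : Ω → Fin 4 → ℝ) (hk : ∀ ω, k ω = ![1, n ω 0, n ω 1, n ω 2])
    (A : Ω → Fin 4 → Fin 4 → ℝ) (hA_meas : Measurable A)
    (hAsymm : ∀ ω i j, A ω i j = A ω j i)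
    (hAk : ∀ ω i, ∑ j, A ω i j * k ω j = 0)
    (F : Ω → ℝ)
    (hF : ∀ ω, F ω =
      (∑ m, ∑ p, (∑ a, ∑ b, eta m a * eta p b * A ω a b) * A ω m p)
        - (1 / 2) * (∑ m, ∑ a, eta m a * A ω a m) ^ 2)
    (hFint : Integrable F μ)
    (P : Fin 4 → ℝ) (hP : ∀ i, P i = ∫ ω, F ω * k ω i ∂μ) :
    0 ≤ P 0 ∧ ∑ i, ∑ j, eta i j * P i * P j ≤ 0 := by
  -- coordinates of n
  have hn3 : ∀ ω, (n ω 0) ^ 2 + (n ω 1) ^ 2 + (n ω 2) ^ 2 = 1 := by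
    intro ω
    have h1 : ‖n ω‖ ^ 2 = 1 := by rw [hn ω]; norm_num
    rw [EuclideanSpace.norm_eq] at h1
    rw [Real.sq_sqrt (by positivity)] at h1
    simpa [Fin.sum_univ_three, sq_abs] using h1
  -- F is nonnegative
  have hF0 : ∀ ω, 0 ≤ F ω := by
    intro ω
    rw [hF ω]
    refine F_nonneg (A ω) (n ω 0) (n ω 1) (n ω 2) (hn3 ω) (hAsymm ω) ?_
    intro i
    have h := hAk ω i
    rw [hk ω] at h
    simp [Fin.sum_univ_four] at h
    linarith
  -- k components
  have hk0 : ∀ ω, k ω 0 = 1 := fun ω => by rw [hk ω]; simp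
  have hk1 : ∀ ω, k ω 1 = n ω 0 := fun ω => by rw [hk ω]; simp
  have hk2 : ∀ ω, k ω 2 = n ω 1 := fun ω => by rw [hk ω]; simp
  have hk3 : ∀ ω, k ω 3 = n ω 2 := fun ω => by rw [hk ω]; simp
  have hP0 : P 0 = ∫ ω, F ω ∂μ := by
    rw [hP 0]; exact integral_congr_ae (Filter.Eventually.of_forall fun ω => by simp [hk0 ω])
  -- n coordinates bounded by 1
  have hnb : ∀ ω (j : Fin 3), |n ω j| ≤ 1 := by
    intro ω j
    have h := hn3 ω
    have hj : j = 0 ∨ j = 1 ∨ j = 2 := by revert j; decide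
    rcases hj with rfl | rfl | rfl <;>
      exact abs_le.mpr ⟨by nlinarith [sq_nonneg (n ω 0 + 1), sq_nonneg (n ω 1 + 1), sq_nonneg (n ω 2 + 1)],
        by nlinarith [sq_nonneg (n ω 0 - 1), sq_nonneg (n ω 1 - 1), sq_nonneg (n ω 2 - 1)]⟩
  -- integrability of F * n_j
  have hi : ∀ j : Fin 3, Integrable (fun ω => F ω * n ω j) μ := by
    intro j
    have hmeas : AEStronglyMeasurable (fun ω => n ω j) μ :=
      ((EuclideanSpace.proj j : EuclideanSpace ℝ (Fin 3) →L[ℝ] ℝ).continuous.measurable.comp hn_meas).aestronglyMeasurable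
    have := hFint.bdd_mul (c := 1) hmeas (Filter.Eventually.of_forall fun ω => by simpa using hnb ω j)
    exact this.congr (Filter.Eventually.of_forall fun ω => mul_comm _ _)
  have hPj : P 1 = ∫ ω, F ω * n ω 0 ∂μ := by
    rw [hP 1]; exact integral_congr_ae (Filter.Eventually.of_forall fun ω => by simp [hk1 ω])
  have hPj2 : P 2 = ∫ ω, F ω * n ω 1 ∂μ := by
    rw [hP 2]; exact integral_congr_ae (Filter.Eventually.of_forall fun ω => by simp [hk2 ω])
  have hPj3 : P 3 = ∫ ω, F ω * n ω 2 ∂μ := by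
    rw [hP 3]; exact integral_congr_ae (Filter.Eventually.of_forall fun ω => by simp [hk3 ω])
  have hP0nn : 0 ≤ P 0 := by
    rw [hP0]; exact integral_nonneg hF0
  -- key directional estimate
  have key : ∀ e0 e1 e2 : ℝ, e0 ^ 2 + e1 ^ 2 + e2 ^ 2 = 1 →
      e0 * P 1 + e1 * P 2 + e2 * P 3 ≤ P 0 := by
    intro e0 e1 e2 he
    rw [hPj, hPj2, hPj3, hP0]
    have i0 : Integrable (fun ω => e0 * (F ω * n ω 0)) μ := (hi 0).const_mul e0
    have i1 : Integrable (fun ω => e1 * (F ω * n ω 1)) μ := (hi 1).const_mul e1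
    have i2 : Integrable (fun ω => e2 * (F ω * n ω 2)) μ := (hi 2).const_mul e2
    have i01 : Integrable (fun ω => e0 * (F ω * n ω 0) + e1 * (F ω * n ω 1)) μ := i0.add i1
    have i012 : Integrable (fun ω => e0 * (F ω * n ω 0) + e1 * (F ω * n ω 1) + e2 * (F ω * n ω 2)) μ := i01.add i2
    have h1 : ∫ ω, (e0 * (F ω * n ω 0) + e1 * (F ω * n ω 1) + e2 * (F ω * n ω 2)) ∂μ
        = e0 * ∫ ω, F ω * n ω 0 ∂μ + e1 * ∫ ω, F ω * n ω 1 ∂μ + e2 * ∫ ω, F ω * n ω 2 ∂μ := by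
      rw [integral_add i01 i2, integral_add i0 i1,
        integral_const_mul, integral_const_mul, integral_const_mul]
    rw [← h1]
    refine integral_mono i012 hFint ?_
    intro ω
    have hdot : e0 * n ω 0 + e1 * n ω 1 + e2 * n ω 2 ≤ 1 := by
      nlinarith [sq_nonneg (e0 - n ω 0), sq_nonneg (e1 - n ω 1), sq_nonneg (e2 - n ω 2), hn3 ω]
    have hmul := mul_le_mul_of_nonneg_left hdot (hF0 ω)
    simp only
    nlinarith [hmul]
  -- spatial part bounded
  have hspace : P 1 ^ 2 + P 2 ^ 2 + P 3 ^ 2 ≤ P 0 ^ 2 := by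
    by_cases hz : P 1 ^ 2 + P 2 ^ 2 + P 3 ^ 2 = 0
    · rw [hz]; positivity
    · set r := Real.sqrt (P 1 ^ 2 + P 2 ^ 2 + P 3 ^ 2) with hr
      have hSS : 0 ≤ P 1 ^ 2 + P 2 ^ 2 + P 3 ^ 2 := by positivity
      have hrr : r ^ 2 = P 1 ^ 2 + P 2 ^ 2 + P 3 ^ 2 := Real.sq_sqrt hSS
      have hrpos : 0 < r := Real.sqrt_pos.mpr (lt_of_le_of_ne hSS (Ne.symm hz))
      have he : (P 1 / r) ^ 2 + (P 2 / r) ^ 2 + (P 3 / r) ^ 2 = 1 := by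
        field_simp
        linarith [hrr]
      have h2 := key (P 1 / r) (P 2 / r) (P 3 / r) he
      have h3 : P 1 / r * P 1 + P 2 / r * P 2 + P 3 / r * P 3 = r := by
        field_simp
        nlinarith [hrr]
      have hrle : r ≤ P 0 := by linarith
      nlinarith [hrle, hrpos.le, hrr]
  constructor
  · exact hP0nn
  · have : (∑ i, ∑ j, eta i j * P i * P j) = -(P 0 * P 0) + P 1 * P 1 + P 2 * P 2 + P 3 * P 3 := by
      simp [eta, Fin.sum_univ_four]
      try ring
    rw [this]
    nlinarith [hspace]
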